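/- Let α ∈ [0,1). Then there exists a constant C, depending only on α, such that for all 0 < t₁ < t₂ one has ∫₀^{t₁} ( ∫_ℝ |G_{t₂−s}(x) − G_{t₁−s}(x)| · |x|^{α} dx )² ds ≤ C (t₂ − t₁)^{1+α}. -/

import Mathlib

open MeasureTheory Real Filter Set


/-- The heat kernel on `ℝ`: `G t x = (4πt)^(-1/2) exp(-x²/(4t))`. -/
noncomputable def G (t x : ℝ) : ℝ :=
  (4 * Real.pi * t) ^ (-(1:ℝ)/2) * Real.exp (-x ^ 2 / (4 * t))


private lemma integrable_comp_abs' {f : ℝ → ℝ} (hf : IntegrableOn f (Ioi 0)) :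
    Integrable (fun x : ℝ => f |x|) := by
  have hIoi : IntegrableOn (fun x : ℝ => f |x|) (Ioi 0) :=
    hf.congr_fun (fun x hx => by rw [abs_of_pos hx]) measurableSet_Ioi
  have hIic : IntegrableOn (fun x : ℝ => f |x|) (Iic 0) := by
    rw [← Measure.map_neg_eq_self (volume : Measure ℝ)]
    have m : MeasurableEmbedding fun x : ℝ => -x := (Homeomorph.neg ℝ).measurableEmbedding
    rw [m.integrableOn_map_iff]
    simp_rw [Function.comp_def, abs_neg, neg_preimage, neg_Iic, neg_zero]
    exact Iff.mpr integrableOn_Ici_iff_integrableOn_Ioi hIoi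
  have := hIic.union hIoi
  rwa [Iic_union_Ioi, integrableOn_univ] at this

private lemma moment_integrable {b : ℝ} (hb : 0 < b) {s : ℝ} (hs : 0 ≤ s) :
    Integrable (fun x : ℝ => |x| ^ s * Real.exp (-b * x ^ 2)) := by
  have h : IntegrableOn (fun x : ℝ => x ^ s * Real.exp (-b * x ^ 2)) (Ioi 0) :=
    integrableOn_rpow_mul_exp_neg_mul_sq hb (by linarith)
  have := integrable_comp_abs' h
  refine this.congr (Eventually.of_forall fun x => ?_)
  simp [sq_abs]

private lemma moment_eq {b : ℝ} (hb : 0 < b) {s : ℝ} (hs : 0 ≤ s) :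
    ∫ x : ℝ, |x| ^ s * Real.exp (-b * x ^ 2)
      = b ^ (-(s + 1) / 2) * Real.Gamma ((s + 1) / 2) := by
  have h1 : (∫ x : ℝ, |x| ^ s * Real.exp (-b * x ^ 2))
      = ∫ x : ℝ, (fun t : ℝ => t ^ s * Real.exp (-b * t ^ 2)) |x| := by
    congr 1; funext x; simp [sq_abs]
  rw [h1, integral_comp_abs (f := fun t : ℝ => t ^ s * Real.exp (-b * t ^ 2))]
  have h2 : (∫ x in Ioi (0:ℝ), x ^ s * Real.exp (-b * x ^ 2))
      = ∫ x in Ioi (0:ℝ), x ^ s * Real.exp (-b * x ^ (2:ℝ)) := by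
    refine setIntegral_congr_fun measurableSet_Ioi (fun x hx => ?_)
    rw [Real.rpow_two]
  rw [h2, integral_rpow_mul_exp_neg_mul_rpow two_pos (by linarith) hb]
  ring

private lemma G_zero (x : ℝ) : G 0 x = 0 := by
  unfold G
  rw [mul_zero, Real.zero_rpow (by norm_num)]
  ring

private lemma G_nonneg {t : ℝ} (ht : 0 ≤ t) (x : ℝ) : 0 ≤ G t x := by
  rcases eq_or_lt_of_le ht with h | h
  · rw [← h, G_zero]
  · unfold G; positivity

private lemma G_hasDerivAt (x : ℝ) {t : ℝ} (ht : 0 < t) :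
    HasDerivAt (fun τ => G τ x) (G t x * (x^2/(4*t^2) - 1/(2*t))) t := by
  have h4πt : (0:ℝ) < 4*Real.pi*t := by positivity
  have h1 : HasDerivAt (fun τ : ℝ => (4*Real.pi*τ) ^ (-(1:ℝ)/2))
      ((-(1:ℝ)/2) * (4*Real.pi*t)^(-(1:ℝ)/2 - 1) * (4*Real.pi)) t := by
    have ha : HasDerivAt (fun τ : ℝ => 4*Real.pi*τ) (4*Real.pi) t := by
      simpa using (hasDerivAt_id t).const_mul (4*Real.pi)
    have hb := Real.hasDerivAt_rpow_const (x := 4*Real.pi*t) (p := -(1:ℝ)/2)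
      (Or.inl (ne_of_gt h4πt))
    exact hb.comp t ha
  have hc : HasDerivAt (fun τ : ℝ => -x^2/(4*τ)) (x^2/(4*t^2)) t := by
    have h := (hasDerivAt_inv (ne_of_gt ht)).const_mul (-x^2/4)
    have heq : (fun τ : ℝ => -x^2/(4*τ)) = (fun τ : ℝ => (-x^2/4) * τ⁻¹) := by
      funext τ; field_simp
    rw [heq]
    refine h.congr_deriv ?_
    ring
  have h2 : HasDerivAt (fun τ : ℝ => Real.exp (-x^2/(4*τ)))
      (Real.exp (-x^2/(4*t)) * (x^2/(4*t^2))) t := hc.exp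
  have hm := h1.mul h2
  refine hm.congr_deriv ?_
  unfold G
  rw [Real.rpow_sub h4πt, Real.rpow_one]
  have hπ := Real.pi_pos
  field_simp
  ring

private lemma G_sub_le {u δ : ℝ} (hu : 0 < u) (hδ : 0 < δ) (hδu : δ ≤ u) (x : ℝ) :
    |G (u + δ) x - G u x| ≤
      δ * ((4*Real.pi*u)^(-(1:ℝ)/2) * Real.exp (-x^2/(8*u)) * (x^2/(4*u^2) + 1/(2*u))) := by
  set M := (4*Real.pi*u)^(-(1:ℝ)/2) * Real.exp (-x^2/(8*u)) * (x^2/(4*u^2) + 1/(2*u)) with hM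
  have hd : ∀ t ∈ Icc u (u+δ), HasDerivWithinAt (fun τ => G τ x)
      (G t x * (x^2/(4*t^2) - 1/(2*t))) (Icc u (u+δ)) t :=
    fun t htm => (G_hasDerivAt x (lt_of_lt_of_le hu htm.1)).hasDerivWithinAt
  have bound : ∀ t ∈ Icc u (u+δ), ‖G t x * (x^2/(4*t^2) - 1/(2*t))‖ ≤ M := by
    rintro t ⟨ht1, ht2⟩
    have htpos : 0 < t := lt_of_lt_of_le hu ht1
    rw [Real.norm_eq_abs, abs_mul, abs_of_nonneg (G_nonneg htpos.le x)]
    have hD : |x^2/(4*t^2) - 1/(2*t)| ≤ x^2/(4*u^2) + 1/(2*u) := by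
      refine (abs_sub _ _).trans ?_
      rw [abs_of_nonneg (by positivity), abs_of_nonneg (by positivity)]
      have d1 : x^2/(4*t^2) ≤ x^2/(4*u^2) :=
        div_le_div_of_nonneg_left (sq_nonneg x) (by positivity) (by nlinarith)
      have d2 : 1/(2*t) ≤ 1/(2*u) := by
        apply one_div_le_one_div_of_le (by positivity)
        linarith
      exact add_le_add d1 d2
    have hG : G t x ≤ (4*Real.pi*u)^(-(1:ℝ)/2) * Real.exp (-x^2/(8*u)) := by
      unfold G
      have e1 : (4*Real.pi*t)^(-(1:ℝ)/2) ≤ (4*Real.pi*u)^(-(1:ℝ)/2) :=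
        Real.rpow_le_rpow_of_nonpos (by positivity)
          (by nlinarith [Real.pi_pos]) (by norm_num)
      have e2 : Real.exp (-x^2/(4*t)) ≤ Real.exp (-x^2/(8*u)) := by
        apply Real.exp_le_exp.2
        have h8 : x^2/(8*u) ≤ x^2/(4*t) :=
          div_le_div_of_nonneg_left (sq_nonneg x) (by positivity) (by linarith)
        rw [neg_div, neg_div]
        exact neg_le_neg h8
      exact mul_le_mul e1 e2 (Real.exp_pos _).le (by positivity)
    calc G t x * |x^2/(4*t^2) - 1/(2*t)|
        ≤ ((4*Real.pi*u)^(-(1:ℝ)/2) * Real.exp (-x^2/(8*u))) * (x^2/(4*u^2) + 1/(2*u)) :=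
          mul_le_mul hG hD (abs_nonneg _) (by positivity)
      _ = M := by rw [hM]
  have key := (convex_Icc u (u+δ)).norm_image_sub_le_of_norm_hasDerivWithin_le hd bound
    (left_mem_Icc.2 (by linarith)) (right_mem_Icc.2 (by linarith))
  rw [Real.norm_eq_abs, Real.norm_eq_abs] at key
  calc |G (u+δ) x - G u x| ≤ M * |u + δ - u| := key
    _ = δ * M := by rw [show u + δ - u = δ by ring, abs_of_pos hδ]; ring

noncomputable def Kc (α : ℝ) : ℝ :=
  (4*Real.pi)^(-(1:ℝ)/2) * 4^((α+1)/2) * Real.Gamma ((α+1)/2)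

private lemma Kc_pos {α : ℝ} (hα : 0 ≤ α) : 0 < Kc α := by
  have hΓ := Real.Gamma_pos_of_pos (show 0 < (α+1)/2 by linarith)
  unfold Kc; positivity

private lemma G_moment {α t : ℝ} (hα : 0 ≤ α) (ht : 0 < t) :
    Integrable (fun x : ℝ => G t x * |x| ^ α) ∧
    ∫ x : ℝ, G t x * |x| ^ α
      = (4*Real.pi)^(-(1:ℝ)/2) * 4^((α+1)/2) * Real.Gamma ((α+1)/2) * t^(α/2) := by
  have hb : (0:ℝ) < 1/(4*t) := by positivity
  have key : ∀ x : ℝ, G t x * |x|^α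
      = (4*Real.pi*t)^(-(1:ℝ)/2) * (|x|^α * Real.exp (-(1/(4*t)) * x^2)) := by
    intro x
    unfold G
    have : -x^2/(4*t) = -(1/(4*t))*x^2 := by ring
    rw [this]; ring
  constructor
  · exact ((moment_integrable hb hα).const_mul _).congr
      (Eventually.of_forall fun x => (key x).symm)
  · simp_rw [key]
    rw [integral_const_mul, moment_eq hb hα]
    rw [Real.mul_rpow (by positivity) (le_of_lt ht), Real.mul_rpow (by norm_num) Real.pi_pos.le]
    rw [one_div, Real.inv_rpow (by positivity), ← Real.rpow_neg (by positivity)]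
    rw [show -(-(α+1)/2) = (α+1)/2 by ring]
    rw [Real.mul_rpow (by norm_num) (le_of_lt ht)]
    rw [show (4:ℝ)^(-(1:ℝ)/2) * Real.pi^(-(1:ℝ)/2) * t^(-(1:ℝ)/2) *
        (4^((α+1)/2) * t^((α+1)/2) * Real.Gamma ((α+1)/2))
      = (4:ℝ)^(-(1:ℝ)/2) * Real.pi^(-(1:ℝ)/2) * 4^((α+1)/2) * Real.Gamma ((α+1)/2) *
        (t^(-(1:ℝ)/2) * t^((α+1)/2)) by ring]
    rw [← Real.rpow_add ht, show -(1:ℝ)/2 + (α+1)/2 = α/2 by ring]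

private lemma G_moment_t0 {α t : ℝ} (hα : 0 ≤ α) (ht : 0 ≤ t) :
    Integrable (fun x : ℝ => G t x * |x| ^ α) ∧
    ∫ x : ℝ, G t x * |x| ^ α ≤ Kc α * t^(α/2) := by
  rcases eq_or_lt_of_le ht with h | h
  · have hz : (fun x : ℝ => G t x * |x| ^ α) = fun _ => 0 := by
      funext x; rw [← h, G_zero]; ring
    rw [hz]
    refine ⟨integrable_zero _ _ _, ?_⟩
    rw [integral_zero]
    have := (Kc_pos hα).le
    positivity
  · obtain ⟨h1, h2⟩ := G_moment hα h
    exact ⟨h1, le_of_eq h2⟩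

private lemma inner_near {α : ℝ} (hα : 0 ≤ α) {u δ : ℝ} (hu : 0 ≤ u) (hδ : 0 < δ)
    (huδ : u ≤ δ) :
    ∫ x : ℝ, |G (u + δ) x - G u x| * |x| ^ α
      ≤ (2 * 2^(α/2) * Kc α) * δ^(α/2) := by
  obtain ⟨hi1, he1⟩ := G_moment_t0 hα (show (0:ℝ) ≤ u + δ by linarith)
  obtain ⟨hi2, he2⟩ := G_moment_t0 hα hu
  have step : ∫ x : ℝ, |G (u + δ) x - G u x| * |x| ^ α
      ≤ ∫ x : ℝ, (G (u+δ) x * |x| ^ α + G u x * |x| ^ α) := by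
    refine integral_mono_of_nonneg (Eventually.of_forall fun x => by positivity)
      (hi1.add hi2) (Eventually.of_forall fun x => ?_)
    have h1 : |G (u+δ) x - G u x| ≤ G (u+δ) x + G u x := by
      refine (abs_sub _ _).trans ?_
      rw [abs_of_nonneg (G_nonneg (by linarith) x), abs_of_nonneg (G_nonneg hu x)]
    calc |G (u + δ) x - G u x| * |x| ^ α
        ≤ (G (u+δ) x + G u x) * |x| ^ α :=
          mul_le_mul_of_nonneg_right h1 (by positivity)
      _ = G (u+δ) x * |x| ^ α + G u x * |x| ^ α := by ring
  rw [integral_add hi1 hi2] at step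
  have hK := (Kc_pos hα).le
  have b1 : Kc α * (u+δ)^(α/2) ≤ Kc α * (2*δ)^(α/2) :=
    mul_le_mul_of_nonneg_left
      (Real.rpow_le_rpow (by linarith) (by linarith) (by linarith)) hK
  have b2 : Kc α * u^(α/2) ≤ Kc α * (2*δ)^(α/2) :=
    mul_le_mul_of_nonneg_left
      (Real.rpow_le_rpow hu (by linarith) (by linarith)) hK
  have : (2*δ:ℝ)^(α/2) = 2^(α/2) * δ^(α/2) := Real.mul_rpow (by norm_num) hδ.le
  calc ∫ x : ℝ, |G (u + δ) x - G u x| * |x| ^ α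
      ≤ Kc α * (2*δ)^(α/2) + Kc α * (2*δ)^(α/2) := by
        refine step.trans (add_le_add (he1.trans b1) (he2.trans b2))
    _ = (2 * 2^(α/2) * Kc α) * δ^(α/2) := by rw [this]; ring

noncomputable def Cfar (α : ℝ) : ℝ :=
  (4*Real.pi)^(-(1:ℝ)/2) * (8^((α+3)/2) * Real.Gamma ((α+3)/2)/4
    + 8^((α+1)/2) * Real.Gamma ((α+1)/2)/2)

private lemma inner_far {α : ℝ} (hα : 0 ≤ α) {u δ : ℝ} (hu : 0 < u) (hδ : 0 < δ)
    (hδu : δ ≤ u) :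
    ∫ x : ℝ, |G (u + δ) x - G u x| * |x| ^ α
      ≤ Cfar α * δ * u^(α/2 - 1) := by
  have h8u : (0:ℝ) < 1/(8*u) := by positivity
  set c1 : ℝ := δ * (4*Real.pi*u)^(-(1:ℝ)/2) / (4*u^2) with hc1
  set c2 : ℝ := δ * (4*Real.pi*u)^(-(1:ℝ)/2) / (2*u) with hc2
  have hrw : ∀ x : ℝ, δ * ((4*Real.pi*u)^(-(1:ℝ)/2) * Real.exp (-x^2/(8*u))
        * (x^2/(4*u^2) + 1/(2*u))) * |x| ^ α
      = c1 * (|x|^(α+2) * Real.exp (-(1/(8*u)) * x^2))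
        + c2 * (|x|^α * Real.exp (-(1/(8*u)) * x^2)) := by
    intro x
    have h2 : |x|^(α+2) = |x|^α * x^2 := by
      rw [Real.rpow_add' (abs_nonneg x) (by linarith : α+2 ≠ 0),
        show ((2:ℝ)) = ((2:ℕ):ℝ) by norm_num, Real.rpow_natCast, sq_abs]
    have h3 : -x^2/(8*u) = -(1/(8*u)) * x^2 := by ring
    rw [h2, h3, hc1, hc2]; ring
  have hi1 := (moment_integrable h8u (show (0:ℝ) ≤ α+2 by linarith)).const_mul c1
  have hi2 := (moment_integrable h8u hα).const_mul c2
  have step : ∫ x : ℝ, |G (u + δ) x - G u x| * |x| ^ α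
      ≤ ∫ x : ℝ, (c1 * (|x|^(α+2) * Real.exp (-(1/(8*u)) * x^2))
        + c2 * (|x|^α * Real.exp (-(1/(8*u)) * x^2))) := by
    refine integral_mono_of_nonneg (Eventually.of_forall fun x => by positivity)
      (hi1.add hi2) (Eventually.of_forall fun x => ?_)
    dsimp only
    rw [← hrw x]
    exact mul_le_mul_of_nonneg_right (G_sub_le hu hδ hδu x) (by positivity)
  rw [integral_add hi1 hi2, integral_const_mul, integral_const_mul,
    moment_eq h8u (show (0:ℝ) ≤ α+2 by linarith), moment_eq h8u hα] at step
  refine step.trans (le_of_eq ?_)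
  rw [hc1, hc2]
  rw [show α+2+1 = α+3 from by ring]
  have key3 : (1/(8*u) : ℝ) ^ (-(α+3)/2) = 8^((α+3)/2) * u^((α+3)/2) := by
    rw [show -(α+3)/2 = -((α+3)/2) from by ring]
    rw [one_div, Real.inv_rpow (by positivity), ← Real.rpow_neg (by positivity), neg_neg]
    exact Real.mul_rpow (by norm_num) hu.le
  have key1 : (1/(8*u) : ℝ) ^ (-(α+1)/2) = 8^((α+1)/2) * u^((α+1)/2) := by
    rw [show -(α+1)/2 = -((α+1)/2) from by ring]
    rw [one_div, Real.inv_rpow (by positivity), ← Real.rpow_neg (by positivity), neg_neg]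
    exact Real.mul_rpow (by norm_num) hu.le
  have keyA : (4*Real.pi*u : ℝ)^(-(1:ℝ)/2) = (4*Real.pi)^(-(1:ℝ)/2) * u^(-(1:ℝ)/2) :=
    Real.mul_rpow (by positivity) hu.le
  rw [key3, key1, keyA]
  have v3 : u^(-(1:ℝ)/2) * u^((α+3)/2) / (4*u^2) = u^(α/2-1)/4 := by
    rw [← Real.rpow_add hu, mul_comm (4:ℝ) (u^2), ← div_div, ← Real.rpow_two u,
      ← Real.rpow_sub hu, show -(1:ℝ)/2 + (α+3)/2 - 2 = α/2 - 1 from by ring]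
  have v1 : u^(-(1:ℝ)/2) * u^((α+1)/2) / (2*u) = u^(α/2-1)/2 := by
    rw [← Real.rpow_add hu, mul_comm (2:ℝ) u, ← div_div, ← Real.rpow_sub_one hu.ne',
      show -(1:ℝ)/2 + (α+1)/2 - 1 = α/2 - 1 from by ring]
  unfold Cfar
  linear_combination (δ * (4*Real.pi)^(-(1:ℝ)/2) * 8^((α+3)/2) * Real.Gamma ((α+3)/2)) * v3
    + (δ * (4*Real.pi)^(-(1:ℝ)/2) * 8^((α+1)/2) * Real.Gamma ((α+1)/2)) * v1

theorem heat_kernel_time_increment_alpha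
    (α : ℝ) (hα : 0 ≤ α) (hα1 : α < 1) :
    ∃ C : ℝ, 0 < C ∧ ∀ t₁ t₂ : ℝ, 0 < t₁ → t₁ < t₂ →
      ∫ s in (0:ℝ)..t₁,
          (∫ x : ℝ, |G (t₂ - s) x - G (t₁ - s) x| * |x| ^ α) ^ 2
        ≤ C * (t₂ - t₁) ^ (1 + α) := by
  set D : ℝ := Cfar α ^ 2 + (2 * 2^(α/2) * Kc α)^2 + 1 with hD
  have hα1' : (0:ℝ) < 1 - α := by linarith
  have hDpos : 0 < D := by positivity
  have hfrac : (0:ℝ) < 1 + 1/(1-α) := by positivity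
  refine ⟨D * (1 + 1/(1-α)), mul_pos hDpos hfrac, fun t₁ t₂ ht₁ h12 => ?_⟩
  set δ : ℝ := t₂ - t₁ with hδdef
  have hδ : 0 < δ := by simp only [hδdef]; linarith
  -- pointwise bound
  have ptwise : ∀ s ∈ Icc (0:ℝ) t₁,
      (∫ x : ℝ, |G (t₂ - s) x - G (t₁ - s) x| * |x| ^ α) ^ 2
        ≤ D * δ^2 * (max (t₁ - s) δ)^(α-2) := by
    intro s hs
    set u : ℝ := t₁ - s with hudef
    have hu0 : 0 ≤ u := by simp only [hudef]; linarith [hs.2]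
    have hts : t₂ - s = u + δ := by simp only [hudef, hδdef]; ring
    rw [hts]
    have Inonneg : 0 ≤ ∫ x : ℝ, |G (u + δ) x - G u x| * |x| ^ α :=
      integral_nonneg fun x => by positivity
    rcases le_or_gt u δ with hcase | hcase
    · have hb := inner_near hα hu0 hδ hcase
      have hsq : (∫ x : ℝ, |G (u + δ) x - G u x| * |x| ^ α) ^ 2
          ≤ ((2 * 2^(α/2) * Kc α) * δ^(α/2))^2 := pow_le_pow_left₀ Inonneg hb 2
      have e1 : (δ^(α/2))^2 = δ^α := by
        rw [← Real.rpow_natCast (δ^(α/2)) 2, ← Real.rpow_mul hδ.le]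
        norm_num
      have e2 : δ^2 * δ^(α-2) = δ^α := by
        rw [← Real.rpow_two, ← Real.rpow_add hδ, show (2:ℝ)+(α-2) = α from by ring]
      rw [max_eq_right hcase]
      have hδα : (0:ℝ) ≤ δ^α := by positivity
      calc (∫ x : ℝ, |G (u + δ) x - G u x| * |x| ^ α) ^ 2
          ≤ ((2 * 2^(α/2) * Kc α) * δ^(α/2))^2 := hsq
        _ = (2 * 2^(α/2) * Kc α)^2 * δ^α := by rw [mul_pow, e1]
        _ ≤ D * δ^α := by
            have hD2 : (2 * 2^(α/2) * Kc α)^2 ≤ D := by rw [hD]; nlinarith [sq_nonneg (Cfar α)]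
            nlinarith
        _ = D * (δ^2 * δ^(α-2)) := by rw [e2]
        _ = D * δ^2 * δ^(α-2) := by ring
    · have hupos : 0 < u := lt_trans hδ hcase
      have hb := inner_far hα hupos hδ hcase.le
      have hsq : (∫ x : ℝ, |G (u + δ) x - G u x| * |x| ^ α) ^ 2
          ≤ (Cfar α * δ * u^(α/2-1))^2 := pow_le_pow_left₀ Inonneg hb 2
      have e1 : (u^(α/2-1))^2 = u^(α-2) := by
        rw [← Real.rpow_natCast (u^(α/2-1)) 2, ← Real.rpow_mul hupos.le]
        norm_num
        ring_nf
      rw [max_eq_left hcase.le]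
      have huα : (0:ℝ) ≤ u^(α-2) := by positivity
      calc (∫ x : ℝ, |G (u + δ) x - G u x| * |x| ^ α) ^ 2
          ≤ (Cfar α * δ * u^(α/2-1))^2 := hsq
        _ = Cfar α ^2 * δ^2 * u^(α-2) := by rw [mul_pow, mul_pow, e1]
        _ ≤ D * δ^2 * u^(α-2) := by
            have h2 : Cfar α ^ 2 ≤ D := by rw [hD]; nlinarith [sq_nonneg (2 * 2^(α/2) * Kc α)]
            have : (0:ℝ) ≤ δ^2 * u^(α-2) := by positivity
            nlinarith
  -- the majorant is continuous hence integrable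
  have hcont : Continuous fun s : ℝ => D * δ^2 * (max (t₁-s) δ)^(α-2) := by
    refine continuous_const.mul (Continuous.rpow_const ?_ fun s => Or.inl ?_)
    · exact (continuous_const.sub continuous_id).max continuous_const
    · exact ne_of_gt (lt_of_lt_of_le hδ (le_max_right _ _))
  -- outer comparison
  rw [intervalIntegral.integral_of_le ht₁.le]
  have step : (∫ s in Ioc (0:ℝ) t₁,
        (∫ x : ℝ, |G (t₂ - s) x - G (t₁ - s) x| * |x| ^ α) ^ 2)
      ≤ ∫ s in Ioc (0:ℝ) t₁, D * δ^2 * (max (t₁-s) δ)^(α-2) := by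
    refine integral_mono_of_nonneg (Eventually.of_forall fun s => sq_nonneg _)
      (hcont.integrableOn_Ioc) ?_
    exact (ae_restrict_iff' measurableSet_Ioc).mpr
      (Eventually.of_forall fun s hs => ptwise s ⟨hs.1.le, hs.2⟩)
  refine step.trans ?_
  -- compute the majorant integral
  rw [← intervalIntegral.integral_of_le ht₁.le]
  have hrefl : (∫ s in (0:ℝ)..t₁, D * δ^2 * (max (t₁-s) δ)^(α-2))
      = ∫ u in (0:ℝ)..t₁, D * δ^2 * (max u δ)^(α-2) := by
    have := intervalIntegral.integral_comp_sub_left (a := (0:ℝ)) (b := t₁)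
      (fun u => D * δ^2 * (max u δ)^(α-2)) t₁
    simpa using this
  rw [hrefl, intervalIntegral.integral_const_mul]
  have hmc : Continuous fun u : ℝ => (max u δ)^(α-2) := by
    refine Continuous.rpow_const ?_ fun s => Or.inl ?_
    · exact continuous_id.max continuous_const
    · exact ne_of_gt (lt_of_lt_of_le hδ (le_max_right _ _))
  have main_int : ∫ u in (0:ℝ)..t₁, (max u δ)^(α-2) ≤ δ^(α-1) * (1 + 1/(1-α)) := by
    set m : ℝ := min δ t₁ with hm
    have hm0 : 0 ≤ m := le_min hδ.le ht₁.le
    have hmδ : m ≤ δ := min_le_left _ _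
    have hmt : m ≤ t₁ := min_le_right _ _
    have split : ∫ u in (0:ℝ)..t₁, (max u δ)^(α-2)
        = (∫ u in (0:ℝ)..m, (max u δ)^(α-2)) + ∫ u in m..t₁, (max u δ)^(α-2) :=
      (intervalIntegral.integral_add_adjacent_intervals
        (hmc.intervalIntegrable _ _) (hmc.intervalIntegrable _ _)).symm
    have piece1 : ∫ u in (0:ℝ)..m, (max u δ)^(α-2) = m * δ^(α-2) := by
      rw [intervalIntegral.integral_congr
        (g := fun _ => (δ:ℝ)^(α-2)) ?_]
      · simp [smul_eq_mul]
      · intro u hu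
        rw [uIcc_of_le hm0] at hu
        exact congrArg (· ^ (α-2)) (max_eq_right (le_trans hu.2 hmδ))
    have e3 : δ * δ^(α-2) = δ^(α-1) := by
      nth_rewrite 1 [← Real.rpow_one δ]
      rw [← Real.rpow_add hδ, show (1:ℝ)+(α-2) = α-1 from by ring]
    have piece1le : ∫ u in (0:ℝ)..m, (max u δ)^(α-2) ≤ δ^(α-1) := by
      rw [piece1, ← e3]
      exact mul_le_mul_of_nonneg_right hmδ (by positivity)
    have piece2 : ∫ u in m..t₁, (max u δ)^(α-2) ≤ δ^(α-1)/(1-α) := by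
      rcases le_or_gt t₁ δ with hcase | hcase
      · have : m = t₁ := min_eq_right hcase
        rw [this, intervalIntegral.integral_same]
        positivity
      · have hmδ' : m = δ := min_eq_left hcase.le
        rw [hmδ']
        have congr2 : ∫ u in δ..t₁, (max u δ)^(α-2) = ∫ u in δ..t₁, u^(α-2) := by
          refine intervalIntegral.integral_congr fun u hu => ?_
          rw [uIcc_of_le hcase.le] at hu
          exact congrArg (· ^ (α-2)) (max_eq_left hu.1)
        rw [congr2, integral_rpow (Or.inr ⟨by intro h; rw [show α = 1 by linarith] at hα1; exact lt_irrefl _ hα1, by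
            rw [uIcc_of_le hcase.le]
            exact fun h => absurd h.1 (not_le.mpr hδ)⟩)]
        have h1 : t₁^(α-2+1) ≤ δ^(α-2+1) :=
          Real.rpow_le_rpow_of_nonpos hδ hcase.le (by linarith)
        have h2 : (0:ℝ) < t₁^(α-2+1) := by positivity
        rw [show α-2+1 = α-1 from by ring] at h1 h2 ⊢
        have hflip : (t₁^(α-1) - δ^(α-1))/(α-1) = (δ^(α-1) - t₁^(α-1))/(1-α) := by
          have hne : α - 1 ≠ 0 := by intro h; linarith
          field_simp
          ring
        rw [hflip]
        refine (div_le_div_iff_of_pos_right hα1').mpr ?_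
        linarith
    calc ∫ u in (0:ℝ)..t₁, (max u δ)^(α-2)
        ≤ δ^(α-1) + δ^(α-1)/(1-α) := by rw [split]; exact add_le_add piece1le piece2
      _ = δ^(α-1) * (1 + 1/(1-α)) := by ring
  have e4 : δ^2 * δ^(α-1) = δ^(1+α) := by
    rw [← Real.rpow_two, ← Real.rpow_add hδ, show (2:ℝ)+(α-1) = 1+α from by ring]
  calc D * δ^2 * ∫ u in (0:ℝ)..t₁, (max u δ)^(α-2)
      ≤ D * δ^2 * (δ^(α-1) * (1 + 1/(1-α))) := by
        refine mul_le_mul_of_nonneg_left main_int (by positivity)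
    _ = D * (1 + 1/(1-α)) * δ^(1+α) := by rw [← e4]; ring
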